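/- Let T and S be ergodic invertible measure-preserving transformations. Suppose there is a sequence (n_i) such that (n_i) is a rigidity sequence for S and a mixing sequence for T (so that for mean-zero f, g: ∫ z^{n_i+k} dσ_{f,T} → 0 for all k while z^{n_i} → 1 in L²(σ_{g,S})). Then for all mean-zero f, g ∈ L², the spectral measures σ_{f,T} and σ_{g,S} are mutually singular. -/

import Mathlib

open MeasureTheory Filter
open Set Submodule StarAlgebra
open scoped NNReal ENNReal

noncomputable instance : MeasurableSpace Circle := borel Circle
instance : BorelSpace Circle := ⟨rfl⟩

/-- `σ` is the spectral measure of `g` for the invertible transformation `e`: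
`∫ z^k dσ = ⟨g, U^k g⟩` for all `k ∈ ℤ`. -/
def IsSpectralMeasure {X : Type*} [MeasurableSpace X] (e : X ≃ᵐ X) (μ : Measure X)
    (g : X → ℂ) (σ : Measure Circle) : Prop :=
  ∀ k : ℕ, (∫ z : Circle, (z : ℂ) ^ (k : ℤ) ∂σ =
      ∫ x, (starRingEnd ℂ) (g x) * g ((⇑e)^[k] x) ∂μ) ∧
    ∫ z : Circle, (z : ℂ) ^ (-(k : ℤ)) ∂σ =
      ∫ x, (starRingEnd ℂ) (g x) * g ((⇑e.symm)^[k] x) ∂μ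

noncomputable def circleChar (k : ℤ) : C(Circle, ℂ) :=
  ⟨fun z => (z : ℂ) ^ k,
    Continuous.zpow₀ continuous_subtype_val k (fun z => Or.inl (Circle.coe_ne_zero z))⟩

lemma circleChar_apply (k : ℤ) (z : Circle) : circleChar k z = (z : ℂ) ^ k := rfl

lemma circleChar_zero : circleChar 0 = 1 := by
  ext z; simp [circleChar_apply]

lemma circleChar_add (m k : ℤ) : circleChar (m + k) = circleChar m * circleChar k := by
  ext z
  simp [circleChar_apply, zpow_add₀ (Circle.coe_ne_zero z)]

lemma circleChar_star (k : ℤ) : star (circleChar k) = circleChar (-k) := by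
  ext z
  simp only [ContinuousMap.star_apply, circleChar_apply, RCLike.star_def]
  rw [map_zpow₀, ← Circle.coe_inv_eq_conj]
  simp [zpow_neg, inv_zpow]

/-- The star subalgebra generated by characters. -/
noncomputable def circleCharSubalgebra : StarSubalgebra ℂ C(Circle, ℂ) where
  toSubalgebra := Algebra.adjoin ℂ (range circleChar)
  star_mem' := by
    show Algebra.adjoin ℂ (range circleChar) ≤ star (Algebra.adjoin ℂ (range circleChar))
    refine Algebra.adjoin_le ?_
    rintro - ⟨n, rfl⟩
    exact Algebra.subset_adjoin ⟨-n, (circleChar_star n).symm⟩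

theorem circleCharSubalgebra_coe :
    Subalgebra.toSubmodule circleCharSubalgebra.toSubalgebra = span ℂ (range circleChar) := by
  apply Algebra.adjoin_eq_span_of_subset
  refine Subset.trans ?_ Submodule.subset_span
  intro x hx
  refine Submonoid.closure_induction (fun _ => id) ⟨0, circleChar_zero⟩ ?_ hx
  rintro - - - - ⟨m, rfl⟩ ⟨n, rfl⟩
  exact ⟨m + n, circleChar_add m n⟩

theorem circleCharSubalgebra_separatesPoints : circleCharSubalgebra.SeparatesPoints := by
  intro x y hxy
  refine ⟨_, ⟨circleChar 1, Algebra.subset_adjoin ⟨1, rfl⟩, rfl⟩, ?_⟩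
  simpa [circleChar_apply, Circle.coe_inj] using hxy

theorem span_circleChar_closure_eq_top :
    (span ℂ (range circleChar)).topologicalClosure = ⊤ := by
  rw [← circleCharSubalgebra_coe]
  exact congr_arg (Subalgebra.toSubmodule <| StarSubalgebra.toSubalgebra ·)
    (ContinuousMap.starSubalgebra_topologicalClosure_eq_top_of_separatesPoints _
      circleCharSubalgebra_separatesPoints)

lemma exists_span_circleChar_close (f : C(Circle, ℂ)) {ε : ℝ} (hε : 0 < ε) :
    ∃ p ∈ span ℂ (range circleChar), ‖f - p‖ < ε := by
  have hf : f ∈ closure (span ℂ (range circleChar) : Set C(Circle, ℂ)) := by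
    rw [← Submodule.topologicalClosure_coe, span_circleChar_closure_eq_top]
    trivial
  obtain ⟨p, hp, hd⟩ := Metric.mem_closure_iff.mp hf ε hε
  exact ⟨p, hp, by rwa [← dist_eq_norm]⟩

lemma continuous_integrable_circle {E : Type*} [NormedAddCommGroup E] {σ : Measure Circle}
    [IsFiniteMeasure σ] {u : Circle → E} (hu : Continuous u) : Integrable u σ :=
  hu.integrable_of_hasCompactSupport (isClosed_tsupport u).isCompact

lemma norm_circle_pow (z : Circle) (m : ℕ) : ‖(z : ℂ) ^ m‖ = 1 := by
  simp [norm_pow, Circle.norm_coe]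

lemma tendstoWeak {σ : Measure Circle} [IsFiniteMeasure σ] {n : ℕ → ℕ}
    (hbase : ∀ k : ℤ, Tendsto (fun i => ∫ z : Circle, (z : ℂ) ^ ((n i : ℤ) + k) ∂σ) atTop
      (nhds 0))
    {w : Circle → ℂ} (hw : Integrable w σ) :
    Tendsto (fun i => ∫ z : Circle, w z * (z : ℂ) ^ (n i) ∂σ) atTop (nhds 0) := by
  have hcont : ∀ i, Continuous fun z : Circle => (z : ℂ) ^ (n i) := fun i =>
    continuous_subtype_val.pow _
  have hint : ∀ (u : Circle → ℂ), Integrable u σ → ∀ i,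
      Integrable (fun z => u z * (z : ℂ) ^ (n i)) σ := by
    intro u hu i
    have := hu.bdd_mul (hcont i).aestronglyMeasurable (Eventually.of_forall fun z => (norm_circle_pow z _).le)
    simpa [mul_comm] using this
  have hspan : ∀ p ∈ span ℂ (range circleChar),
      Tendsto (fun i => ∫ z : Circle, p z * (z : ℂ) ^ (n i) ∂σ) atTop (nhds 0) := by
    intro p hp
    induction hp using Submodule.span_induction with
    | mem p hp =>
      obtain ⟨k, rfl⟩ := hp
      have he : ∀ i, (fun z : Circle => circleChar k z * (z : ℂ) ^ (n i))
          = fun z : Circle => (z : ℂ) ^ ((n i : ℤ) + k) := by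
        intro i
        funext z
        rw [circleChar_apply, ← zpow_natCast (z : ℂ), ← zpow_add₀ (Circle.coe_ne_zero z),
          add_comm]
      simp_rw [he]
      exact hbase k
    | zero => simpa using tendsto_const_nhds
    | add p q hp hq ihp ihq =>
      have : ∀ i, ∫ z : Circle, (p + q) z * (z : ℂ) ^ (n i) ∂σ
          = (∫ z : Circle, p z * (z : ℂ) ^ (n i) ∂σ) + ∫ z : Circle, q z * (z : ℂ) ^ (n i) ∂σ := by
        intro i
        rw [← integral_add (hint p (continuous_integrable_circle p.continuous) i)
          (hint q (continuous_integrable_circle q.continuous) i)]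
        simp [add_mul]
      simp_rw [this]
      simpa using ihp.add ihq
    | smul c p hp ihp =>
      have : ∀ i, ∫ z : Circle, (c • p) z * (z : ℂ) ^ (n i) ∂σ
          = c • ∫ z : Circle, p z * (z : ℂ) ^ (n i) ∂σ := by
        intro i
        rw [← integral_smul]
        simp [smul_eq_mul, mul_assoc]
      simp_rw [this]
      simpa using ihp.const_smul c
  rw [NormedAddCommGroup.tendsto_nhds_zero]
  intro ε hε
  -- approximate w in L¹ by a continuous function
  obtain ⟨ψ, hψclose, hψint⟩ := hw.exists_boundedContinuous_integral_sub_le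
    (show (0:ℝ) < ε/4 by linarith)
  -- approximate ψ uniformly by a trig polynomial
  set C : ℝ := (σ Set.univ).toReal with hC
  have hCpos : 0 ≤ C := ENNReal.toReal_nonneg
  obtain ⟨p, hpmem, hpclose⟩ := exists_span_circleChar_close ψ.toContinuousMap
    (show (0:ℝ) < (ε/4)/(C+1) by positivity)
  -- L¹ distance between w and p
  have hL1 : ∫ z : Circle, ‖w z - p z‖ ∂σ ≤ ε/2 := by
    have h1 : ∫ z : Circle, ‖w z - ψ z‖ ∂σ ≤ ε/4 := hψclose
    have h2 : ∫ z : Circle, ‖ψ z - p z‖ ∂σ ≤ ε/4 := by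
      have hb : ∀ z : Circle, ‖ψ z - p z‖ ≤ (ε/4)/(C+1) := by
        intro z
        calc ‖ψ z - p z‖ = ‖(ψ.toContinuousMap - p) z‖ := by simp
          _ ≤ ‖ψ.toContinuousMap - p‖ := (ψ.toContinuousMap - p).norm_coe_le_norm z
          _ ≤ (ε/4)/(C+1) := hpclose.le
      calc ∫ z : Circle, ‖ψ z - p z‖ ∂σ ≤ ∫ _z : Circle, (ε/4)/(C+1) ∂σ := by
            apply integral_mono_of_nonneg (Eventually.of_forall fun z => norm_nonneg _)
              (integrable_const _) (Eventually.of_forall hb)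
        _ = C * ((ε/4)/(C+1)) := by simp [hC, smul_eq_mul, mul_comm, Measure.real]
        _ ≤ (C+1) * ((ε/4)/(C+1)) := by
            apply mul_le_mul_of_nonneg_right (by linarith) (by positivity)
        _ = ε/4 := by field_simp
    calc ∫ z : Circle, ‖w z - p z‖ ∂σ
        ≤ ∫ z : Circle, (‖w z - ψ z‖ + ‖ψ z - p z‖) ∂σ := by
          apply integral_mono_of_nonneg (Eventually.of_forall fun z => norm_nonneg _)
          · exact ((hw.sub hψint).norm.add
              (continuous_integrable_circle (ψ.continuous.sub p.continuous)).norm)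
          · exact Eventually.of_forall fun z => norm_sub_le_norm_sub_add_norm_sub _ _ _
      _ = (∫ z : Circle, ‖w z - ψ z‖ ∂σ) + ∫ z : Circle, ‖ψ z - p z‖ ∂σ :=
          integral_add (hw.sub hψint).norm
            (continuous_integrable_circle (ψ.continuous.sub p.continuous)).norm
      _ ≤ ε/4 + ε/4 := add_le_add h1 h2
      _ = ε/2 := by ring
  have hwint : Integrable (fun z : Circle => w z - p z) σ :=
    hw.sub (continuous_integrable_circle p.continuous)
  have hev := NormedAddCommGroup.tendsto_nhds_zero.mp (hspan p hpmem) (ε/2) (by linarith)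
  filter_upwards [hev] with i hi
  have hsplit : ∫ z : Circle, w z * (z : ℂ) ^ (n i) ∂σ
      = (∫ z : Circle, (w z - p z) * (z : ℂ) ^ (n i) ∂σ)
        + ∫ z : Circle, p z * (z : ℂ) ^ (n i) ∂σ := by
    rw [← integral_add (hint _ hwint i) (hint p (continuous_integrable_circle p.continuous) i)]
    congr 1
    funext z
    ring
  have hbound : ‖∫ z : Circle, (w z - p z) * (z : ℂ) ^ (n i) ∂σ‖ ≤ ε/2 := by
    have heq : (fun z : Circle => ‖(w z - p z) * (z : ℂ) ^ (n i)‖)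
        = fun z : Circle => ‖w z - p z‖ := by
      funext z
      rw [norm_mul, norm_circle_pow, mul_one]
    calc ‖∫ z : Circle, (w z - p z) * (z : ℂ) ^ (n i) ∂σ‖
        ≤ ∫ z : Circle, ‖(w z - p z) * (z : ℂ) ^ (n i)‖ ∂σ := norm_integral_le_integral_norm _
      _ = ∫ z : Circle, ‖w z - p z‖ ∂σ := by rw [heq]
      _ ≤ ε/2 := hL1
  calc ‖∫ z : Circle, w z * (z : ℂ) ^ (n i) ∂σ‖
      ≤ ‖∫ z : Circle, (w z - p z) * (z : ℂ) ^ (n i) ∂σ‖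
        + ‖∫ z : Circle, p z * (z : ℂ) ^ (n i) ∂σ‖ := by rw [hsplit]; exact norm_add_le _ _
    _ < ε/2 + ε/2 := by exact add_lt_add_of_le_of_lt hbound hi
    _ = ε := by ring

lemma le_add_sq_div {a δ : ℝ} (ha : 0 ≤ a) (hδ : 0 < δ) : a ≤ δ + a ^ 2 / δ := by
  have h : a * δ ≤ δ ^ 2 + a ^ 2 := by nlinarith [sq_nonneg (a - δ)]
  calc a = a * δ / δ := by field_simp
    _ ≤ (δ ^ 2 + a ^ 2) / δ := by exact div_le_div_of_nonneg_right h (by positivity)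
    _ = δ + a ^ 2 / δ := by field_simp

lemma tendsto_L1_of_L2 {σ : Measure Circle} [IsFiniteMeasure σ] {n : ℕ → ℕ}
    (hH : Tendsto (fun i => ∫ z : Circle, ‖(z : ℂ) ^ (n i) - 1‖ ^ 2 ∂σ) atTop (nhds 0)) :
    Tendsto (fun i => ∫ z : Circle, ‖(z : ℂ) ^ (n i) - 1‖ ∂σ) atTop (nhds 0) := by
  have hcont : ∀ i, Continuous fun z : Circle => ‖(z : ℂ) ^ (n i) - 1‖ := fun i =>
    ((continuous_subtype_val.pow _).sub continuous_const).norm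
  rw [NormedAddCommGroup.tendsto_nhds_zero]
  intro ε hε
  set C : ℝ := (σ Set.univ).toReal with hCdef
  have hC0 : 0 ≤ C := ENNReal.toReal_nonneg
  set δ : ℝ := ε / (4 * (C + 1)) with hδdef
  have hδ : 0 < δ := by positivity
  have hev := NormedAddCommGroup.tendsto_nhds_zero.mp hH (δ * (ε / 2)) (by positivity)
  filter_upwards [hev] with i hi
  have hHnn : 0 ≤ ∫ z : Circle, ‖(z : ℂ) ^ (n i) - 1‖ ^ 2 ∂σ :=
    integral_nonneg fun z => by positivity
  have hHlt : ∫ z : Circle, ‖(z : ℂ) ^ (n i) - 1‖ ^ 2 ∂σ < δ * (ε / 2) := by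
    rwa [Real.norm_eq_abs, abs_of_nonneg hHnn] at hi
  have hGnn : 0 ≤ ∫ z : Circle, ‖(z : ℂ) ^ (n i) - 1‖ ∂σ :=
    integral_nonneg fun z => norm_nonneg _
  rw [Real.norm_eq_abs, abs_of_nonneg hGnn]
  have hsq_int : Integrable (fun z : Circle => ‖(z : ℂ) ^ (n i) - 1‖ ^ 2) σ :=
    continuous_integrable_circle ((hcont i).pow 2)
  have key : ∫ z : Circle, ‖(z : ℂ) ^ (n i) - 1‖ ∂σ
      ≤ δ * C + (∫ z : Circle, ‖(z : ℂ) ^ (n i) - 1‖ ^ 2 ∂σ) / δ := by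
    have hmono : ∫ z : Circle, ‖(z : ℂ) ^ (n i) - 1‖ ∂σ
        ≤ ∫ z : Circle, (δ + ‖(z : ℂ) ^ (n i) - 1‖ ^ 2 / δ) ∂σ := by
      apply integral_mono (continuous_integrable_circle (hcont i))
        ((integrable_const δ).add (hsq_int.div_const δ))
      exact fun z => le_add_sq_div (norm_nonneg _) hδ
    calc ∫ z : Circle, ‖(z : ℂ) ^ (n i) - 1‖ ∂σ
        ≤ ∫ z : Circle, (δ + ‖(z : ℂ) ^ (n i) - 1‖ ^ 2 / δ) ∂σ := hmono
      _ = δ * C + (∫ z : Circle, ‖(z : ℂ) ^ (n i) - 1‖ ^ 2 ∂σ) / δ := by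
          rw [integral_add (integrable_const δ) (hsq_int.div_const δ), integral_const,
            integral_div]
          simp [hCdef, smul_eq_mul, mul_comm, Measure.real]
  have h1 : δ * C ≤ ε / 4 := by
    rw [hδdef]
    rw [div_mul_eq_mul_div, div_le_iff₀ (by positivity)]
    nlinarith
  have h2 : (∫ z : Circle, ‖(z : ℂ) ^ (n i) - 1‖ ^ 2 ∂σ) / δ < ε / 2 :=
    (div_lt_iff₀ hδ).mpr (by rw [mul_comm]; exact hHlt)
  calc ∫ z : Circle, ‖(z : ℂ) ^ (n i) - 1‖ ∂σ
      ≤ δ * C + (∫ z : Circle, ‖(z : ℂ) ^ (n i) - 1‖ ^ 2 ∂σ) / δ := key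
    _ < ε / 4 + ε / 2 := add_lt_add_of_le_of_lt h1 h2
    _ < ε := by linarith

/-- Let `T` and `S` be ergodic invertible measure-preserving transformations and `(n i)`
a sequence that is a rigidity sequence for `S` and a mixing sequence for `T`, in the
sense that `z^{n i} → 1` in `L²(σ_{g,S})` for every mean-zero `g` while
`∫ z^{n i + k} dσ_{f,T} → 0` for every `k` and mean-zero `f`.  Then for all mean-zero
`f, g`, the spectral measures `σ_{f,T}` and `σ_{g,S}` are mutually singular. -/
theorem stmt19 {X Y : Type*} [MeasurableSpace X] [MeasurableSpace Y]
    (μ : Measure X) [IsProbabilityMeasure μ] (ν : Measure Y) [IsProbabilityMeasure ν]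
    (eT : X ≃ᵐ X) (hT : MeasurePreserving ⇑eT μ μ) (hTerg : Ergodic ⇑eT μ)
    (eS : Y ≃ᵐ Y) (hS : MeasurePreserving ⇑eS ν ν) (hSerg : Ergodic ⇑eS ν)
    (n : ℕ → ℕ)
    (hrigS : ∀ g : Y → ℂ, MemLp g 2 ν → (∫ y, g y ∂ν) = 0 →
      ∀ σ : Measure Circle, IsFiniteMeasure σ → IsSpectralMeasure eS ν g σ →
        Tendsto (fun i => ∫ z : Circle, ‖(z : ℂ) ^ (n i) - 1‖ ^ 2 ∂σ) atTop (nhds 0))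
    (hmixT : ∀ f : X → ℂ, MemLp f 2 μ → (∫ x, f x ∂μ) = 0 →
      ∀ σ : Measure Circle, IsFiniteMeasure σ → IsSpectralMeasure eT μ f σ →
        ∀ k : ℤ, Tendsto (fun i => ∫ z : Circle, (z : ℂ) ^ ((n i : ℤ) + k) ∂σ) atTop
          (nhds 0)) :
    ∀ (f : X → ℂ) (g : Y → ℂ), MemLp f 2 μ → (∫ x, f x ∂μ) = 0 →
      MemLp g 2 ν → (∫ y, g y ∂ν) = 0 →
      ∀ σf σg : Measure Circle, IsFiniteMeasure σf → IsFiniteMeasure σg →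
        IsSpectralMeasure eT μ f σf → IsSpectralMeasure eS ν g σg →
        σf ⟂ₘ σg := by
  intro f g hf hf0 hg hg0 σf σg hσf hσg hsf hsg
  haveI := hσf
  haveI := hσg
  set ρ : Measure Circle := σf.withDensity (σg.rnDeriv σf) with hρdef
  have hρle : ρ ≤ σg := Measure.withDensity_rnDeriv_le σg σf
  haveI : IsFiniteMeasure ρ := isFiniteMeasure_of_le σg hρle
  suffices hρ0 : ρ = 0 by
    have hdecomp := Measure.rnDeriv_add_singularPart σg σf
    rw [← hρdef, hρ0, zero_add] at hdecomp
    have := Measure.mutuallySingular_singularPart σg σf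
    rw [hdecomp] at this
    exact this.symm
  -- two limits for F i
  set F : ℕ → ℂ := fun i => ∫ z : Circle, (z : ℂ) ^ (n i) ∂ρ with hFdef
  -- Limit 1 : F → (ρ univ).toReal
  have hG : Tendsto (fun i => ∫ z : Circle, ‖(z : ℂ) ^ (n i) - 1‖ ∂σg) atTop (nhds 0) :=
    tendsto_L1_of_L2 (hrigS g hg hg0 σg hσg hsg)
  have hG' : Tendsto (fun i => ∫ z : Circle, ‖(z : ℂ) ^ (n i) - 1‖ ∂ρ) atTop (nhds 0) := by
    apply squeeze_zero (fun i => integral_nonneg fun z => norm_nonneg _) (fun i => ?_) hG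
    exact integral_mono_measure hρle (Eventually.of_forall fun z => norm_nonneg _)
      (continuous_integrable_circle (((continuous_subtype_val.pow _).sub continuous_const).norm))
  have hlimA : Tendsto F atTop (nhds (((ρ Set.univ).toReal : ℝ) : ℂ)) := by
    rw [tendsto_iff_norm_sub_tendsto_zero]
    apply squeeze_zero (fun i => norm_nonneg _) (fun i => ?_) hG'
    have hint1 : Integrable (fun z : Circle => (z : ℂ) ^ (n i)) ρ :=
      continuous_integrable_circle (continuous_subtype_val.pow _)
    have : F i - (((ρ Set.univ).toReal : ℝ) : ℂ)
        = ∫ z : Circle, ((z : ℂ) ^ (n i) - 1) ∂ρ := by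
      rw [integral_sub hint1 (integrable_const 1), integral_const]
      simp [hFdef, Complex.real_smul, Measure.real]
    rw [this]
    exact norm_integral_le_integral_norm _
  -- Limit 2 : F → 0
  have hlimB : Tendsto F atTop (nhds 0) := by
    have hae : ∀ᵐ z ∂σf, σg.rnDeriv σf z < ⊤ := Measure.rnDeriv_lt_top σg σf
    have hρeq : ρ = σf.withDensity (fun z => (((σg.rnDeriv σf z).toNNReal : ℝ≥0) : ℝ≥0∞)) := by
      rw [hρdef]
      exact withDensity_congr_ae (hae.mono fun z hz => (ENNReal.coe_toNNReal hz.ne).symm)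
    have hmeas : Measurable fun z => (σg.rnDeriv σf z).toNNReal :=
      (Measure.measurable_rnDeriv σg σf).ennreal_toNNReal
    have hFeq : F = fun i => ∫ z : Circle,
        (((σg.rnDeriv σf z).toReal : ℝ) : ℂ) * (z : ℂ) ^ (n i) ∂σf := by
      funext i
      rw [hFdef]
      simp only
      rw [hρeq, integral_withDensity_eq_integral_smul hmeas]
      refine integral_congr_ae (Eventually.of_forall fun z => ?_)
      simp only [NNReal.smul_def, Complex.real_smul]
      norm_cast
    rw [hFeq]
    exact tendstoWeak (hmixT f hf hf0 σf hσf hsf)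
      ((Measure.integrable_toReal_rnDeriv (μ := σg) (ν := σf)).ofReal)
  have huniq := tendsto_nhds_unique hlimA hlimB
  have : (ρ Set.univ).toReal = 0 := by exact_mod_cast huniq
  have hu : ρ Set.univ = 0 := by
    rcases (ENNReal.toReal_eq_zero_iff _).mp this with h | h
    · exact h
    · exact absurd h (measure_ne_top ρ _)
  exact Measure.measure_univ_eq_zero.mp hu
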